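/- In the algebra of partial permutations, the elementary symmetric polynomial in the partial Jucys-Murphy elements satisfies e_ℓ(ξ_1,…,ξ_n) = Σ_{σ ∈ S_n, κ(σ) = n−ℓ} (σ, supp(σ)), where κ(σ) is the number of cycles of σ (including fixed points) and supp(σ) is the set of non-fixed points of σ. -/

import Mathlib

abbrev PPn (n : ℕ) : Type := {p : Equiv.Perm (Fin n) × Finset (Fin n) // ∀ x ∉ p.2, p.1 x = x}

instance (n : ℕ) : Monoid (PPn n) where
  mul p q := ⟨(p.1.1 * q.1.1, p.1.2 ∪ q.1.2), by
    intro x hx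
    simp only [Finset.mem_union, not_or] at hx
    simp [Equiv.Perm.mul_apply, q.2 x hx.2, p.2 x hx.1]⟩
  one := ⟨(1, ∅), fun x _ => rfl⟩
  mul_assoc p q r := Subtype.ext (Prod.ext (mul_assoc _ _ _) (Finset.union_assoc _ _ _))
  one_mul p := Subtype.ext (Prod.ext (one_mul _) (Finset.empty_union _))
  mul_one p := Subtype.ext (Prod.ext (mul_one _) (Finset.union_empty _))

abbrev Bn (n : ℕ) : Type := MonoidAlgebra ℚ (PPn n)

def ppSwap {n : ℕ} (j i : Fin n) : PPn n := ⟨(Equiv.swap j i, {j, i}), by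
  intro x hx
  simp only [Finset.mem_insert, Finset.mem_singleton, not_or] at hx
  exact Equiv.swap_apply_of_ne_of_ne hx.1 hx.2⟩

noncomputable def xi (n : ℕ) (i : Fin n) : Bn n :=
  ∑ j ∈ Finset.univ.filter (· < i), MonoidAlgebra.of ℚ (PPn n) (ppSwap j i)

/-- Elementary symmetric polynomial evaluated at the partial Jucys-Murphy elements
(products taken in increasing order of the indices, which is unambiguous since the `ξ_i`
commute). -/
noncomputable def eXi (n ℓ : ℕ) : Bn n :=
  ∑ s ∈ Finset.univ.powersetCard ℓ, ((s.sort (· ≤ ·)).map (xi n)).prod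

/-- number of cycles of `σ`, including fixed points -/
def kappa {n : ℕ} (σ : Equiv.Perm (Fin n)) : ℕ :=
  σ.cycleType.card + (Finset.univ.filter fun x => σ x = x).card


open Equiv Equiv.Perm Finset

variable {α : Type*} [DecidableEq α] [Fintype α]

theorem my_support_mul_swap {σ : Perm α} {j m : α} (hjm : j ≠ m) (hm : σ m = m) :
    (σ * Equiv.swap j m).support = σ.support ∪ {j, m} := by
  ext x
  simp only [Finset.mem_union, Finset.mem_insert, Finset.mem_singleton, Equiv.Perm.mem_support,
    Equiv.Perm.mul_apply]
  rcases eq_or_ne x j with rfl | hxj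
  · simp only [Equiv.swap_apply_left, hm]
    constructor
    · intro _; right; left; trivial
    · intro _; exact fun h => hjm h.symm
  rcases eq_or_ne x m with rfl | hxm
  · simp only [Equiv.swap_apply_right]
    constructor
    · intro _; right; right; trivial
    · intro _ h
      exact hjm (σ.injective (h.trans hm.symm))
  · rw [Equiv.swap_apply_of_ne_of_ne hxj hxm]
    constructor
    · intro h; left; exact h
    · rintro (h | h | h)
      · exact h
      · exact absurd h hxj
      · exact absurd h hxm

theorem my_isCycle_mul_swap {c : Perm α} (hc : c.IsCycle) {j m : α} (hj : c j ≠ j)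
    (hm : c m = m) : IsCycle (c * Equiv.swap j m) := by
  have hjm : j ≠ m := fun h => hj (by rw [h]; exact hm)
  set τ := c * Equiv.swap j m with hτ
  have hτm : τ m = c j := by simp [hτ, Equiv.Perm.mul_apply, Equiv.swap_apply_right]
  have hτj : τ j = m := by simp [hτ, Equiv.Perm.mul_apply, Equiv.swap_apply_left, hm]
  have hτx : ∀ x, x ≠ j → x ≠ m → τ x = c x := by
    intro x h1 h2; simp [hτ, Equiv.Perm.mul_apply, Equiv.swap_apply_of_ne_of_ne h1 h2]
  have hpow_ne_m : ∀ k : ℕ, (c ^ (k+1)) j ≠ m := by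
    intro k he
    have h2 : (c ^ (k+1)) (c j) = c ((c ^ (k+1)) j) := by
      rw [← Equiv.Perm.mul_apply, ← Equiv.Perm.mul_apply, ← pow_succ, ← pow_succ']
    rw [he, hm, ← he] at h2
    exact hj ((c ^ (k+1)).injective h2)
  have key : ∀ k : ℕ, (∀ i, 1 ≤ i → i ≤ k → (c ^ i) j ≠ j) →
      (τ ^ (k+1)) m = (c ^ (k+1)) j := by
    intro k
    induction k with
    | zero => intro _; simpa using hτm
    | succ k ih =>
      intro h
      have h1 := ih (fun i hi1 hi2 => h i hi1 (hi2.trans (Nat.le_succ k)))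
      have hne_j : (c ^ (k+1)) j ≠ j := h (k+1) (by omega) le_rfl
      have hne_m : (c ^ (k+1)) j ≠ m := hpow_ne_m k
      calc (τ ^ (k+2)) m = τ ((τ ^ (k+1)) m) := by
            rw [← Equiv.Perm.mul_apply, ← pow_succ']
          _ = τ ((c ^ (k+1)) j) := by rw [h1]
          _ = c ((c ^ (k+1)) j) := hτx _ hne_j hne_m
          _ = (c ^ (k+2)) j := by rw [← Equiv.Perm.mul_apply, ← pow_succ']
  refine ⟨m, ?_, ?_⟩
  · rw [hτm]
    intro h
    exact hjm (c.injective (h.trans hm.symm))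
  · intro y hy
    rcases eq_or_ne y m with rfl | hym
    · exact Equiv.Perm.SameCycle.refl _ _
    rcases eq_or_ne y j with h | hyj
    · exact (show Equiv.Perm.SameCycle τ y m from ⟨1, by rw [zpow_one, h]; exact hτj⟩).symm
    have hcy : c y ≠ y := by rw [← hτx y hyj hym]; exact hy
    obtain ⟨k0, hk0⟩ := hc.exists_pow_eq hj hcy
    have hk0' : ∃ k, (c ^ (k+1)) j = y := by
      cases k0 with
      | zero => exact absurd (show j = y by simpa using hk0) (fun h => hyj h.symm)
      | succ k => exact ⟨k, hk0⟩
    classical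
    set K := Nat.find hk0' with hK
    have hKs : (c ^ (K+1)) j = y := Nat.find_spec hk0'
    have hmin : ∀ i, 1 ≤ i → i ≤ K → (c ^ i) j ≠ j := by
      intro i h1 h2 he
      have h3 : (c ^ ((K - i) + 1)) j = y := by
        have h4 : (c ^ ((K - i) + 1)) ((c ^ i) j) = (c ^ (K + 1)) j := by
          rw [← Equiv.Perm.mul_apply, ← pow_add]
          congr 2
          omega
        rw [he] at h4
        rw [h4, hKs]
      exact Nat.find_min hk0' (by omega) h3
    exact ⟨((K : ℤ) + 1), by
      have := key K hmin
      rw [show ((K : ℤ) + 1) = ((K + 1 : ℕ) : ℤ) by push_cast; ring, zpow_natCast, this, hKs]⟩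
theorem my_factors_mul_swap {σ : Perm α} {j m : α} (hj : σ j ≠ j) (hm : σ m = m) :
    (σ * Equiv.swap j m).cycleFactorsFinset
      = insert (σ.cycleOf j * Equiv.swap j m) ((σ.cycleFactorsFinset).erase (σ.cycleOf j)) := by
  classical
  have hjm : j ≠ m := fun h => hj (by rw [h]; exact hm)
  set c := σ.cycleOf j with hc
  have hcj : c j = σ j := σ.cycleOf_apply_self j
  have hcm : c m = m := by
    rw [hc, Equiv.Perm.cycleOf_apply]
    split <;> simp [hm]
  have hccyc : c.IsCycle := Equiv.Perm.isCycle_cycleOf σ hj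
  have hcmem : c ∈ σ.cycleFactorsFinset :=
    Equiv.Perm.cycleOf_mem_cycleFactorsFinset_iff.mpr (Equiv.Perm.mem_support.mpr hj)
  have hmns : m ∉ σ.support := by simp [hm]
  have hjc : j ∈ c.support := Equiv.Perm.mem_support.mpr (by rw [hcj]; exact hj)
  have hc'cyc : (c * Equiv.swap j m).IsCycle :=
    my_isCycle_mul_swap hccyc (by rw [hcj]; exact hj) hcm
  have hc'supp : (c * Equiv.swap j m).support = c.support ∪ {j, m} :=
    my_support_mul_swap hjm hcm
  have hcagree : ∀ a ∈ c.support, c a = σ a :=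
    (Equiv.Perm.mem_cycleFactorsFinset_iff.mp hcmem).2
  have hτj : (σ * Equiv.swap j m) j = m := by
    simp [Equiv.Perm.mul_apply, Equiv.swap_apply_left, hm]
  have hτm : (σ * Equiv.swap j m) m = σ j := by
    simp [Equiv.Perm.mul_apply, Equiv.swap_apply_right]
  have hτx : ∀ x, x ≠ j → x ≠ m → (σ * Equiv.swap j m) x = σ x := by
    intro x h1 h2; simp [Equiv.Perm.mul_apply, Equiv.swap_apply_of_ne_of_ne h1 h2]
  have hc'mem : (c * Equiv.swap j m) ∈ (σ * Equiv.swap j m).cycleFactorsFinset := by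
    rw [Equiv.Perm.mem_cycleFactorsFinset_iff]
    refine ⟨hc'cyc, ?_⟩
    intro a ha
    rw [hc'supp] at ha
    rcases eq_or_ne a j with rfl | haj
    · rw [hτj]; simp [Equiv.Perm.mul_apply, Equiv.swap_apply_left, hcm]
    rcases eq_or_ne a m with rfl | ham
    · rw [hτm]; simp [Equiv.Perm.mul_apply, Equiv.swap_apply_right, hcj]
    · have ha' : a ∈ c.support := by
        simp only [Finset.mem_union, Finset.mem_insert, Finset.mem_singleton] at ha
        rcases ha with h | h | h
        · exact h
        · exact absurd h haj
        · exact absurd h ham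
      rw [hτx a haj ham, Equiv.Perm.mul_apply,
        Equiv.swap_apply_of_ne_of_ne haj ham, hcagree a ha']
  ext p
  simp only [Finset.mem_insert, Finset.mem_erase]
  constructor
  · intro hp
    obtain ⟨hpc, hpag⟩ := Equiv.Perm.mem_cycleFactorsFinset_iff.mp hp
    by_cases hmp : m ∈ p.support
    · left
      rw [Equiv.Perm.cycle_is_cycleOf hmp hp,
        Equiv.Perm.cycle_is_cycleOf (show m ∈ (c * Equiv.swap j m).support by
          rw [hc'supp]; simp) hc'mem]
    · right
      have hjp : j ∉ p.support := by
        intro hjp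
        have h1 : p j = m := by rw [hpag j hjp, hτj]
        exact hmp (h1 ▸ Equiv.Perm.apply_mem_support.mpr hjp)
      have hpσ : p ∈ σ.cycleFactorsFinset := by
        rw [Equiv.Perm.mem_cycleFactorsFinset_iff]
        refine ⟨hpc, fun a ha => ?_⟩
        have haj : a ≠ j := fun h => hjp (h ▸ ha)
        have ham : a ≠ m := fun h => hmp (h ▸ ha)
        rw [hpag a ha, hτx a haj ham]
      exact ⟨fun h => hjp (h ▸ hjc), hpσ⟩
  · rintro (rfl | ⟨hpne, hpσ⟩)
    · exact hc'mem
    · rw [Equiv.Perm.mem_cycleFactorsFinset_iff]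
      obtain ⟨hpc, hpag⟩ := Equiv.Perm.mem_cycleFactorsFinset_iff.mp hpσ
      have hjp : j ∉ p.support := fun hjp => hpne (Equiv.Perm.cycle_is_cycleOf hjp hpσ)
      refine ⟨hpc, fun a ha => ?_⟩
      have haj : a ≠ j := fun h => hjp (h ▸ ha)
      have ham : a ≠ m := fun h =>
        hmns (Equiv.Perm.mem_cycleFactorsFinset_support_le hpσ (h ▸ ha))
      rw [hpag a ha, hτx a haj ham]

theorem my_card_factors_mul_swap {σ : Perm α} {j m : α} (hj : σ j ≠ j) (hm : σ m = m) :
    (σ * Equiv.swap j m).cycleFactorsFinset.card = σ.cycleFactorsFinset.card := by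
  classical
  have hcmem : σ.cycleOf j ∈ σ.cycleFactorsFinset :=
    Equiv.Perm.cycleOf_mem_cycleFactorsFinset_iff.mpr (Equiv.Perm.mem_support.mpr hj)
  have hjm : j ≠ m := fun h => hj (by rw [h]; exact hm)
  have hcm : (σ.cycleOf j) m = m := by
    rw [Equiv.Perm.cycleOf_apply]; split <;> simp [hm]
  have hmns : m ∉ σ.support := by simp [hm]
  have hnotmem : σ.cycleOf j * Equiv.swap j m ∉ (σ.cycleFactorsFinset).erase (σ.cycleOf j) := by
    intro h
    have h2 := Equiv.Perm.mem_cycleFactorsFinset_support_le (Finset.mem_of_mem_erase h)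
      (show m ∈ (σ.cycleOf j * Equiv.swap j m).support by
        rw [my_support_mul_swap hjm hcm]; simp)
    exact hmns h2
  rw [my_factors_mul_swap hj hm, Finset.card_insert_of_notMem hnotmem,
    Finset.card_erase_of_mem hcmem]
  have : 1 ≤ σ.cycleFactorsFinset.card := Finset.card_pos.mpr ⟨_, hcmem⟩
  omega
theorem my_kappa_eq {n : ℕ} (σ : Perm (Fin n)) :
    kappa σ = σ.cycleFactorsFinset.card + (n - σ.support.card) := by
  unfold kappa
  congr 1
  · rw [Equiv.Perm.cycleType_def, Multiset.card_map]
    rfl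
  · have h : (Finset.univ.filter fun x => σ x = x) = σ.supportᶜ := by
      ext x; simp [Equiv.Perm.mem_support, not_not]
    rw [h, Finset.card_compl, Fintype.card_fin]

theorem my_kappa_mul_swap {n : ℕ} {σ : Perm (Fin n)} {j m : Fin n} (hjm : j ≠ m)
    (hm : σ m = m) : kappa (σ * Equiv.swap j m) + 1 = kappa σ := by
  classical
  have hsupp := my_support_mul_swap hjm hm
  have hle : (σ * Equiv.swap j m).support.card ≤ n := by
    simpa using Finset.card_le_univ (σ * Equiv.swap j m).support
  have hmns : m ∉ σ.support := by simp [hm]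
  by_cases hj : σ j = j
  · have hjns : j ∉ σ.support := by simp [hj]
    have hdisj : Equiv.Perm.Disjoint σ (Equiv.swap j m) := by
      intro x
      by_cases h1 : x = j
      · left; rw [h1]; exact hj
      by_cases h2 : x = m
      · left; rw [h2]; exact hm
      · right; exact Equiv.swap_apply_of_ne_of_ne h1 h2
    have hfac : (σ * Equiv.swap j m).cycleFactorsFinset
        = insert (Equiv.swap j m) σ.cycleFactorsFinset := by
      rw [hdisj.cycleFactorsFinset_mul_eq_union,
        (Equiv.Perm.isCycle_swap hjm).cycleFactorsFinset_eq_singleton, Finset.union_comm,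
        ← Finset.insert_eq]
    have hnotmem : Equiv.swap j m ∉ σ.cycleFactorsFinset := by
      intro h
      exact hjns (Equiv.Perm.mem_cycleFactorsFinset_support_le h
        (by rw [Equiv.Perm.support_swap hjm]; simp))
    have hdisj2 : Disjoint σ.support ({j, m} : Finset (Fin n)) := by
      rw [Finset.disjoint_right]
      intro x hx
      simp only [Finset.mem_insert, Finset.mem_singleton] at hx
      rcases hx with rfl | rfl
      · exact hjns
      · exact hmns
    have hcard : (σ * Equiv.swap j m).support.card = σ.support.card + 2 := by
      rw [hsupp, Finset.card_union_of_disjoint hdisj2]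
      congr 1
      rw [Finset.card_insert_of_notMem (by simpa using hjm), Finset.card_singleton]
    rw [my_kappa_eq, my_kappa_eq, hfac, Finset.card_insert_of_notMem hnotmem, hcard]
    rw [hcard] at hle
    omega
  · have hfaccard := my_card_factors_mul_swap hj hm
    have hjs : j ∈ σ.support := Equiv.Perm.mem_support.mpr hj
    have hun : σ.support ∪ {j, m} = insert m σ.support := by
      ext x
      simp only [Finset.mem_union, Finset.mem_insert, Finset.mem_singleton]
      constructor
      · rintro (h | rfl | rfl)
        · right; exact h
        · right; exact hjs
        · left; rfl
      · rintro (rfl | h)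
        · right; right; rfl
        · left; exact h
    have hcard : (σ * Equiv.swap j m).support.card = σ.support.card + 1 := by
      rw [hsupp, hun, Finset.card_insert_of_notMem hmns]
    rw [my_kappa_eq, my_kappa_eq, hfaccard, hcard]
    rw [hcard] at hle
    omega

theorem my_kappa_one {n : ℕ} : kappa (1 : Perm (Fin n)) = n := by
  rw [my_kappa_eq]
  simp

theorem my_kappa_add_one_le {n : ℕ} {σ : Perm (Fin n)} (h : σ ≠ 1) : kappa σ + 1 ≤ n := by
  rw [my_kappa_eq]
  have h2 : 2 ≤ σ.support.card := Equiv.Perm.one_lt_card_support_of_ne_one h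
  have hsum : σ.cycleType.sum = σ.support.card := Equiv.Perm.sum_cycleType σ
  have h2c : Multiset.card σ.cycleType • 2 ≤ σ.cycleType.sum :=
    Multiset.card_nsmul_le_sum fun x hx => Equiv.Perm.two_le_of_mem_cycleType hx
  have hcT : Multiset.card σ.cycleType = σ.cycleFactorsFinset.card := by
    rw [Equiv.Perm.cycleType_def, Multiset.card_map]; rfl
  have hle : σ.support.card ≤ n := by simpa using Finset.card_le_univ σ.support
  rw [smul_eq_mul] at h2c
  omega

theorem my_kappa_eq_iff_one {n : ℕ} {σ : Perm (Fin n)} : kappa σ = n ↔ σ = 1 := by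
  constructor
  · intro h
    by_contra hne
    have := my_kappa_add_one_le hne
    omega
  · rintro rfl; exact my_kappa_one

theorem my_card_filter_lt_le {n m : ℕ} :
    ((Finset.univ : Finset (Fin n)).filter fun i => i.val < m).card ≤ m := by
  calc ((Finset.univ : Finset (Fin n)).filter fun i => i.val < m).card
      ≤ (Finset.range m).card := by
        apply Finset.card_le_card_of_injOn (fun i : Fin n => i.val)
        · intro x hx
          simp only [Finset.mem_coe, Finset.mem_filter] at hx
          simpa using hx.2
        · intro x _ y _ h
          exact Fin.ext h
    _ = m := Finset.card_range m

theorem my_kappa_ge {n m : ℕ} {σ : Perm (Fin n)} (hfix : ∀ x : Fin n, m ≤ x.val → σ x = x) :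
    n - m ≤ kappa σ := by
  have hsub : ((Finset.univ : Finset (Fin n)).filter fun i => m ≤ i.val)
      ⊆ (Finset.univ.filter fun x => σ x = x) := by
    intro x hx
    simp only [Finset.mem_filter] at hx ⊢
    exact ⟨Finset.mem_univ x, hfix x hx.2⟩
  have hcompl : ((Finset.univ : Finset (Fin n)).filter fun i => m ≤ i.val)
      = ((Finset.univ : Finset (Fin n)).filter fun i => i.val < m)ᶜ := by
    ext x; simp [not_lt]
  have h1 : n - m ≤ ((Finset.univ : Finset (Fin n)).filter fun i => m ≤ i.val).card := by
    rw [hcompl, Finset.card_compl, Fintype.card_fin]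
    have := my_card_filter_lt_le (n := n) (m := m)
    omega
  have h2 := Finset.card_le_card hsub
  unfold kappa
  omega
noncomputable def myLHS (n m ℓ : ℕ) : Bn n :=
  ∑ s ∈ ((Finset.univ : Finset (Fin n)).filter fun i => i.val < m).powersetCard ℓ,
    ((s.sort (· ≤ ·)).map (xi n)).prod

noncomputable def myRHS (n m ℓ : ℕ) : Bn n :=
  ∑ σ : Equiv.Perm (Fin n),
    if (∀ x : Fin n, m ≤ x.val → σ x = x) ∧ kappa σ = n - ℓ then
      MonoidAlgebra.of ℚ (PPn n) ⟨(σ, σ.support), fun _ hx => Equiv.Perm.notMem_support.mp hx⟩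
    else 0

theorem myLHS_zero {n m : ℕ} : myLHS n m 0 = 1 := by
  unfold myLHS
  rw [Finset.powersetCard_zero, Finset.sum_singleton]
  simp

theorem myRHS_zero {n m : ℕ} : myRHS n m 0 = 1 := by
  unfold myRHS
  have hiff : ∀ σ : Equiv.Perm (Fin n),
      ((∀ x : Fin n, m ≤ x.val → σ x = x) ∧ kappa σ = n - 0) ↔ σ = 1 := by
    intro σ
    constructor
    · rintro ⟨_, h⟩
      rw [Nat.sub_zero] at h
      exact my_kappa_eq_iff_one.mp h
    · rintro rfl
      exact ⟨fun x _ => rfl, by rw [Nat.sub_zero]; exact my_kappa_one⟩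
  calc (∑ σ : Equiv.Perm (Fin n),
      if (∀ x : Fin n, m ≤ x.val → σ x = x) ∧ kappa σ = n - 0 then
        MonoidAlgebra.of ℚ (PPn n) ⟨(σ, σ.support), fun _ hx => Equiv.Perm.notMem_support.mp hx⟩
      else 0)
      = ∑ σ : Equiv.Perm (Fin n), if σ = 1 then
          MonoidAlgebra.of ℚ (PPn n) ⟨(σ, σ.support), fun _ hx => Equiv.Perm.notMem_support.mp hx⟩
        else 0 := by
        apply Finset.sum_congr rfl
        intro σ _
        exact if_congr (hiff σ) rfl rfl
    _ = 1 := by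
        rw [Finset.sum_ite_eq' Finset.univ 1]
        rw [if_pos (Finset.mem_univ _)]
        have h1 : (⟨((1 : Equiv.Perm (Fin n)), (1 : Equiv.Perm (Fin n)).support),
            fun _ hx => Equiv.Perm.notMem_support.mp hx⟩ : PPn n) = 1 := by
          apply Subtype.ext
          apply Prod.ext
          · rfl
          · exact Equiv.Perm.support_one
        rw [h1, map_one]

theorem myRHS_eq_zero {n m ℓ : ℕ} (hmn : m < n) (hml : m < ℓ) : myRHS n m ℓ = 0 := by
  unfold myRHS
  apply Finset.sum_eq_zero
  intro σ _
  rw [if_neg]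
  rintro ⟨h1, h2⟩
  have := my_kappa_ge h1
  omega

theorem myLHS_eq_zero {n m ℓ : ℕ} (hml : m < ℓ) : myLHS n m ℓ = 0 := by
  unfold myLHS
  have h : (((Finset.univ : Finset (Fin n)).filter fun i => i.val < m).powersetCard ℓ) = ∅ :=
    Finset.powersetCard_eq_empty.mpr (lt_of_le_of_lt my_card_filter_lt_le hml)
  rw [h, Finset.sum_empty]

theorem my_sort_insert_max {n : ℕ} {s : Finset (Fin n)} {a : Fin n} (h : ∀ b ∈ s, b ≤ a)
    (ha : a ∉ s) : (insert a s).sort (· ≤ ·) = s.sort (· ≤ ·) ++ [a] := by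
  refine (fun hp h2 => List.Perm.eq_of_pairwise' (Finset.pairwise_sort _ _) h2 hp) ?_ ?_
  · have p1 : List.Perm ((insert a s).sort (· ≤ ·)) (insert a s).toList :=
      Finset.sort_perm_toList _ _
    have p2 : List.Perm (insert a s).toList (a :: s.toList) := Finset.toList_insert ha
    have p3 : List.Perm s.toList (s.sort (· ≤ ·)) := (Finset.sort_perm_toList _ _).symm
    have p4 : List.Perm ((s.sort (· ≤ ·)) ++ [a]) (a :: s.sort (· ≤ ·)) :=
      List.perm_append_singleton _ _
    exact (p1.trans (p2.trans (p3.cons a))).trans p4.symm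
  · refine List.pairwise_append.mpr ⟨Finset.pairwise_sort _ _, List.pairwise_singleton _ a, ?_⟩
    intro x hx b hb
    rw [List.mem_singleton] at hb
    subst hb
    exact h x ((Finset.mem_sort _).mp hx)
theorem my_move {n m k : ℕ} (hm : m < n) (hkn : k + 1 ≤ n) :
    (∑ τ : Equiv.Perm (Fin n),
        if (∀ x : Fin n, m + 1 ≤ x.val → τ x = x) ∧ τ ⟨m, hm⟩ ≠ ⟨m, hm⟩
            ∧ kappa τ = n - (k+1) then
          MonoidAlgebra.of ℚ (PPn n) ⟨(τ, τ.support), fun _ hx => Equiv.Perm.notMem_support.mp hx⟩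
        else 0)
      = myRHS n m k * xi n ⟨m, hm⟩ := by
  classical
  unfold myRHS xi
  rw [Finset.sum_mul_sum]
  simp only [ite_mul, zero_mul, ← map_mul]
  rw [← Finset.sum_product']
  rw [← Finset.sum_filter, ← Finset.sum_filter]
  refine (Finset.sum_nbij'
    (fun p : Equiv.Perm (Fin n) × Fin n => p.1 * Equiv.swap p.2 ⟨m, hm⟩)
    (fun τ : Equiv.Perm (Fin n) => (τ * Equiv.swap (τ⁻¹ ⟨m, hm⟩) ⟨m, hm⟩, τ⁻¹ ⟨m, hm⟩))
    ?_ ?_ ?_ ?_ ?_).symm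
  · -- hi : maps pairs into the τ set
    rintro ⟨σ, j⟩ hp
    simp only [Finset.mem_filter, Finset.mem_product, Finset.mem_univ, true_and] at hp
    have hfix := hp.2.1
    have hκ := hp.2.2
    have hjm : j.val < m := hp.1
    have hja : j ≠ (⟨m, hm⟩ : Fin n) := by
      intro h; rw [h] at hjm; exact absurd hjm (lt_irrefl m)
    have hσa : σ (⟨m, hm⟩ : Fin n) = ⟨m, hm⟩ := hfix _ (le_refl m)
    simp only [Finset.mem_filter, Finset.mem_univ, true_and]
    refine ⟨?_, ?_, ?_⟩
    · intro x hx
      have hxa : x ≠ (⟨m, hm⟩ : Fin n) := by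
        intro h; rw [h] at hx; simp at hx
      have hxj : x ≠ j := by
        intro h; rw [h] at hx; omega
      rw [Equiv.Perm.mul_apply, Equiv.swap_apply_of_ne_of_ne hxj hxa]
      exact hfix x (by omega)
    · rw [Equiv.Perm.mul_apply, Equiv.swap_apply_right]
      intro h
      exact hja (σ.injective (h.trans hσa.symm))
    · have := my_kappa_mul_swap hja hσa
      omega
  · -- hj : maps τ set into pairs
    intro τ hτ
    simp only [Finset.mem_filter, Finset.mem_univ, true_and] at hτ
    obtain ⟨hfix, hτa, hκ⟩ := hτ
    set a : Fin n := ⟨m, hm⟩ with ha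
    have hτj : τ (τ⁻¹ a) = a := τ.apply_symm_apply a
    have hja : τ⁻¹ a ≠ a := by
      intro h
      apply hτa
      rw [h] at hτj
      exact hτj
    have hjlt : (τ⁻¹ a).val < m := by
      by_contra hge
      push_neg at hge
      rcases Nat.eq_or_lt_of_le hge with h | h
      · exact hja (Fin.ext h.symm)
      · have h2 := hfix (τ⁻¹ a) (by omega)
        rw [h2] at hτj
        exact hja hτj
    have hσa : (τ * Equiv.swap (τ⁻¹ a) a) a = a := by
      rw [Equiv.Perm.mul_apply, Equiv.swap_apply_right, hτj]
    simp only [Finset.mem_filter, Finset.mem_product, Finset.mem_univ, true_and]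
    refine ⟨hjlt, ?_, ?_⟩
    · intro x hx
      rcases Nat.eq_or_lt_of_le hx with h | h
      · have : x = a := Fin.ext h.symm
        rw [this]; exact hσa
      · have hxa : x ≠ a := by intro hh; rw [hh] at h; exact absurd h (lt_irrefl _)
        have hxj : x ≠ τ⁻¹ a := by intro hh; rw [hh] at h; omega
        rw [Equiv.Perm.mul_apply, Equiv.swap_apply_of_ne_of_ne hxj hxa]
        exact hfix x h
    · have hswap : (τ * Equiv.swap (τ⁻¹ a) a) * Equiv.swap (τ⁻¹ a) a = τ := by
        rw [mul_assoc, Equiv.swap_mul_self, mul_one]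
      have h3 := my_kappa_mul_swap hja hσa
      rw [hswap] at h3
      omega
  · -- left inverse
    rintro ⟨σ, j⟩ hp
    simp only [Finset.mem_filter, Finset.mem_product, Finset.mem_univ, true_and] at hp
    have hσa : σ (⟨m, hm⟩ : Fin n) = ⟨m, hm⟩ := hp.2.1 _ (le_refl m)
    have hinv : (σ * Equiv.swap j ⟨m, hm⟩)⁻¹ (⟨m, hm⟩ : Fin n) = j := by
      rw [mul_inv_rev, Equiv.Perm.mul_apply, Equiv.swap_inv]
      have : σ⁻¹ (⟨m, hm⟩ : Fin n) = ⟨m, hm⟩ := by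
        rw [Equiv.Perm.inv_eq_iff_eq, hσa]
      rw [this, Equiv.swap_apply_right]
    dsimp only
    rw [hinv]
    refine Prod.ext ?_ rfl
    rw [mul_assoc, Equiv.swap_mul_self, mul_one]
  · -- right inverse
    intro τ hτ
    dsimp only
    rw [mul_assoc, Equiv.swap_mul_self, mul_one]
  · -- values agree
    rintro ⟨σ, j⟩ hp
    simp only [Finset.mem_filter, Finset.mem_product, Finset.mem_univ, true_and] at hp
    have hjm : j.val < m := hp.1
    have hja : j ≠ (⟨m, hm⟩ : Fin n) := by
      intro h; rw [h] at hjm; exact absurd hjm (lt_irrefl m)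
    have hσa : σ (⟨m, hm⟩ : Fin n) = ⟨m, hm⟩ := hp.2.1 _ (le_refl m)
    congr 1
    apply Subtype.ext
    apply Prod.ext
    · rfl
    · exact (my_support_mul_swap hja hσa).symm

theorem my_step {n m : ℕ} (hm : m < n) (ih : ∀ ℓ ≤ m, myLHS n m ℓ = myRHS n m ℓ)
    {ℓ : ℕ} (hℓ : ℓ ≤ m + 1) : myLHS n (m+1) ℓ = myRHS n (m+1) ℓ := by
  classical
  cases ℓ with
  | zero => rw [myLHS_zero, myRHS_zero]
  | succ k =>
    have hk : k ≤ m := by omega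
    have hfilter : ((Finset.univ : Finset (Fin n)).filter fun i => i.val < m + 1)
        = insert (⟨m, hm⟩ : Fin n) ((Finset.univ : Finset (Fin n)).filter fun i => i.val < m) := by
      ext x
      simp only [Finset.mem_filter, Finset.mem_insert, Finset.mem_univ, true_and]
      constructor
      · intro hx
        rcases Nat.lt_succ_iff_lt_or_eq.mp hx with h | h
        · right; exact h
        · left; exact Fin.ext h
      · rintro (rfl | hx)
        · exact Nat.lt_succ_self m
        · exact hx.trans (Nat.lt_succ_self m)
    have hanotin : (⟨m, hm⟩ : Fin n) ∉
        (Finset.univ : Finset (Fin n)).filter fun i => i.val < m := by simp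
    -- LHS split
    have hLHS : myLHS n (m+1) (k+1) = myLHS n m (k+1) + myLHS n m k * xi n ⟨m, hm⟩ := by
      unfold myLHS
      rw [hfilter, Finset.powersetCard_succ_insert hanotin, Finset.sum_union ?disj]
      case disj =>
        rw [Finset.disjoint_left]
        intro s hs hs'
        obtain ⟨t, ht, rfl⟩ := Finset.mem_image.mp hs'
        have h1 := (Finset.mem_powersetCard.mp hs).1
        exact hanotin (h1 (Finset.mem_insert_self _ t))
      congr 1
      rw [Finset.sum_image ?inj]
      case inj =>
        intro s1 h1 s2 h2 he
        have ha1 : (⟨m, hm⟩ : Fin n) ∉ s1 :=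
          fun hc => hanotin ((Finset.mem_powersetCard.mp h1).1 hc)
        have ha2 : (⟨m, hm⟩ : Fin n) ∉ s2 :=
          fun hc => hanotin ((Finset.mem_powersetCard.mp h2).1 hc)
        rw [← Finset.erase_insert ha1, ← Finset.erase_insert ha2, he]
      rw [Finset.sum_mul]
      apply Finset.sum_congr rfl
      intro s hs
      have hsub := (Finset.mem_powersetCard.mp hs).1
      have hnotin : (⟨m, hm⟩ : Fin n) ∉ s := fun hc => hanotin (hsub hc)
      have hle : ∀ b ∈ s, b ≤ (⟨m, hm⟩ : Fin n) := by
        intro b hb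
        have h2 := hsub hb
        simp only [Finset.mem_filter, Finset.mem_univ, true_and] at h2
        exact le_of_lt h2
      rw [my_sort_insert_max hle hnotin, List.map_append, List.prod_append]
      simp
    -- RHS split
    have hRHS : myRHS n (m+1) (k+1)
        = myRHS n m (k+1)
          + ∑ τ : Equiv.Perm (Fin n),
              if (∀ x : Fin n, m + 1 ≤ x.val → τ x = x) ∧ τ ⟨m, hm⟩ ≠ ⟨m, hm⟩
                  ∧ kappa τ = n - (k+1) then
                MonoidAlgebra.of ℚ (PPn n)
                  ⟨(τ, τ.support), fun _ hx => Equiv.Perm.notMem_support.mp hx⟩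
              else 0 := by
      unfold myRHS
      rw [← Finset.sum_add_distrib]
      apply Finset.sum_congr rfl
      intro τ _
      by_cases hτa : τ (⟨m, hm⟩ : Fin n) = ⟨m, hm⟩
      · have hP : (∀ x : Fin n, m ≤ x.val → τ x = x)
            ↔ (∀ x : Fin n, m + 1 ≤ x.val → τ x = x) := by
          constructor
          · intro h x hx; exact h x (by omega)
          · intro h x hx
            rcases Nat.eq_or_lt_of_le hx with h' | h'
            · have hxa : x = ⟨m, hm⟩ := Fin.ext h'.symm
              rw [hxa]; exact hτa
            · exact h x h'
        rw [if_neg (show ¬((∀ x : Fin n, m + 1 ≤ x.val → τ x = x) ∧ τ ⟨m, hm⟩ ≠ ⟨m, hm⟩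
            ∧ kappa τ = n - (k+1)) from fun hcon => hcon.2.1 hτa), add_zero]
        exact if_congr (and_congr_left' hP.symm) rfl rfl
      · rw [if_neg (show ¬((∀ x : Fin n, m ≤ x.val → τ x = x) ∧ kappa τ = n - (k+1)) from
            fun hcon => hτa (hcon.1 (⟨m, hm⟩ : Fin n) (le_refl m))), zero_add]
        apply if_congr _ rfl rfl
        constructor
        · rintro ⟨h1, h2⟩; exact ⟨h1, hτa, h2⟩
        · rintro ⟨h1, _, h2⟩; exact ⟨h1, h2⟩
    rw [hLHS, hRHS, my_move hm (by omega)]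
    congr 1
    · rcases Nat.lt_or_ge m (k+1) with h | h
      · have hkm : k = m := by omega
        subst hkm
        rw [myLHS_eq_zero (by omega), myRHS_eq_zero hm (by omega)]
      · exact ih (k+1) h
    · rw [ih k hk]

theorem my_main (n : ℕ) : ∀ m, m ≤ n → ∀ ℓ, ℓ ≤ m → myLHS n m ℓ = myRHS n m ℓ := by
  intro m
  induction m with
  | zero =>
    intro _ ℓ hℓ
    interval_cases ℓ
    rw [myLHS_zero, myRHS_zero]
  | succ m ihm =>
    intro hm1 ℓ hℓ
    have hm : m < n := by omega
    refine my_step hm (fun ℓ' hℓ' => ihm (by omega) ℓ' hℓ') hℓ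

/-- `e_ℓ(ξ_1,…,ξ_n) = Σ_{σ ∈ S_n, κ(σ)=n-ℓ} (σ, supp(σ))`. -/
theorem eXi_eq (n ℓ : ℕ) (hl : ℓ ≤ n) :
    eXi n ℓ = ∑ σ : Equiv.Perm (Fin n),
      if kappa σ = n - ℓ then
        MonoidAlgebra.of ℚ (PPn n) ⟨(σ, σ.support), fun _ hx => Equiv.Perm.notMem_support.mp hx⟩
      else 0 := by
  have h1 : eXi n ℓ = myLHS n n ℓ := by
    unfold eXi myLHS
    congr 2
    exact (Finset.filter_true_of_mem (fun x _ => x.isLt)).symm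
  rw [h1, my_main n n le_rfl ℓ hl]
  unfold myRHS
  apply Finset.sum_congr rfl
  intro σ _
  apply if_congr _ rfl rfl
  constructor
  · rintro ⟨_, h⟩; exact h
  · intro h; exact ⟨fun x hx => absurd x.isLt (not_lt.mpr hx), h⟩
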